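/- Let M be a finite MDP with alarm region and x_0 ∉ X_a an initial state. For every history-dependent policy π̂ of the binary augmented MDP M̂ with initial state (x_0,0), every trajectory ((x_0,y_0),…,(x_T,y_T), a_0,…,a_{T−1}) with P^π̂-probability strictly greater than zero satisfies, for every t ∈ {0,…,T}: y_t = 1 if and only if there exists s ∈ {0,…,t} with x_s ∈ X_a. Consequently, P^π̂(Y_T = 1) = P^π̂(∃ t ∈ {0,…,T}: X_t ∈ X_a). -/

import Mathlib

/- Common framework: finite MDPs with alarm region, trajectories,
   history-dependent policies, trajectory laws, objectives. -/

attribute [local instance] Classical.propDecidable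

noncomputable section

/-- A finite MDP with alarm region `Xa`, horizon `T ≥ 1`, transition pmf `P`,
running rewards `r` and terminal reward `rT`. -/
structure MDP (X A : Type) [Fintype X] [Fintype A] where
  T : ℕ
  hT : 1 ≤ T
  P : X → A → X → ℝ
  P_nonneg : ∀ x a x', 0 ≤ P x a x'
  P_sum : ∀ x a, ∑ x', P x a x' = 1
  r : Fin T → X → A → ℝ
  rT : X → ℝ
  Xa : Set X

variable {X A : Type} [Fintype X] [Fintype A]

/-- A trajectory `(x₀,…,x_T, a₀,…,a_{T-1})`. -/
abbrev Traj (M : MDP X A) := (Fin (M.T + 1) → X) × (Fin M.T → A)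

/-- A history-dependent randomized policy: at each time `t < T` it maps the
history `(x₀,…,x_t, a₀,…,a_{t-1})` to a pmf on actions. -/
structure HistPolicy (M : MDP X A) where
  π : (t : Fin M.T) → (Fin (t.val + 1) → X) → (Fin t.val → A) → A → ℝ
  nonneg : ∀ t xs as a, 0 ≤ π t xs as a
  sum_one : ∀ t xs as, ∑ a, π t xs as a = 1

/-- A policy is Markov if at each time it depends only on the current state. -/
def IsMarkov {M : MDP X A} (p : HistPolicy M) : Prop :=
  ∀ (t : Fin M.T) (xs xs' : Fin (t.val + 1) → X) (as as' : Fin t.val → A),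
    xs (Fin.last t.val) = xs' (Fin.last t.val) → p.π t xs as = p.π t xs' as'

/-- The state part of the history at time `t` determined by a trajectory. -/
def histStates {M : MDP X A} (τ : Traj M) (t : Fin M.T) : Fin (t.val + 1) → X :=
  fun i => τ.1 (Fin.castLE (by have := t.isLt; omega) i)

/-- The action part of the history at time `t` determined by a trajectory. -/
def histActs {M : MDP X A} (τ : Traj M) (t : Fin M.T) : Fin t.val → A :=
  fun i => τ.2 (Fin.castLE (by have := t.isLt; omega) i)

/-- The probability mass of a trajectory under policy `p` with initial state `x0`. -/
def trajProb (M : MDP X A) (p : HistPolicy M) (x0 : X) (τ : Traj M) : ℝ :=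
  (if τ.1 0 = x0 then (1 : ℝ) else 0) *
    ∏ t : Fin M.T,
      p.π t (histStates τ t) (histActs τ t) (τ.2 t) *
        M.P (τ.1 t.castSucc) (τ.2 t) (τ.1 t.succ)

/-- Probability of an event (a set of trajectories) under the trajectory law. -/
def probEvent (M : MDP X A) (p : HistPolicy M) (x0 : X) (E : Traj M → Prop) : ℝ :=
  ∑ τ : Traj M, if E τ then trajProb M p x0 τ else 0

/-- The objective `J_M(π) = E[Σ_t r_t(X_t,A_t) + r_T(X_T)]`. -/
def J (M : MDP X A) (p : HistPolicy M) (x0 : X) : ℝ :=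
  ∑ τ : Traj M, trajProb M p x0 τ *
    (∑ t : Fin M.T, M.r t (τ.1 t.castSucc) (τ.2 t) + M.rT (τ.1 (Fin.last M.T)))

/-- The binary augmented MDP: the extra `Bool` state records whether an alarm
has been triggered so far. -/
def binAug (M : MDP X A) : MDP (X × Bool) A where
  T := M.T
  hT := M.hT
  P := fun s a s' =>
    if s'.2 = (s.2 || decide (s'.1 ∈ M.Xa)) then M.P s.1 a s'.1 else 0
  P_nonneg := by
    intro s a s'
    try dsimp only
    split
    · exact M.P_nonneg s.1 a s'.1
    · exact le_refl 0
  P_sum := by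
    intro s a
    rw [Fintype.sum_prod_type]
    have h : ∀ x' : X,
        (∑ y : Bool, if y = (s.2 || decide (x' ∈ M.Xa)) then M.P s.1 a x' else 0)
          = M.P s.1 a x' := by
      intro x'; simp
    rw [Finset.sum_congr rfl fun x' _ => h x']
    exact M.P_sum s.1 a
  r := fun t s a => M.r t s.1 a
  rT := fun s => M.rT s.1
  Xa := {s | s.1 ∈ M.Xa}

lemma trajProb_nonneg (M : MDP X A) (p : HistPolicy M) (x0 : X) (τ : Traj M) :
    0 ≤ trajProb M p x0 τ := by
  unfold trajProb
  apply mul_nonneg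
  · split <;> norm_num
  · exact Finset.prod_nonneg fun t _ =>
      mul_nonneg (p.nonneg _ _ _ _) (M.P_nonneg _ _ _)

/-- Along every trajectory of positive probability in the
binary augmented MDP, the flag at time `t` is raised iff some state up to time
`t` lies in the alarm region; consequently `P(Y_T = 1) = P(∃ t, X_t ∈ X_a)`. -/
theorem binAug_flag_correct [Nonempty X] [Nonempty A]
    (M : MDP X A) (x0 : X) (hx0 : x0 ∉ M.Xa) (q : HistPolicy (binAug M)) :
    (∀ σ : Traj (binAug M), 0 < trajProb (binAug M) q (x0, false) σ →
      ∀ t : Fin (M.T + 1),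
        ((σ.1 t).2 = true ↔ ∃ s : Fin (M.T + 1), s ≤ t ∧ (σ.1 s).1 ∈ M.Xa)) ∧
    probEvent (binAug M) q (x0, false)
        (fun σ => (σ.1 (Fin.last (binAug M).T)).2 = true) =
      probEvent (binAug M) q (x0, false) (fun σ => ∃ t, (σ.1 t).1 ∈ M.Xa) := by
  have main : ∀ σ : Traj (binAug M), 0 < trajProb (binAug M) q (x0, false) σ →
      ∀ t : Fin (M.T + 1),
        ((σ.1 t).2 = true ↔ ∃ s : Fin (M.T + 1), s ≤ t ∧ (σ.1 s).1 ∈ M.Xa) := by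
    intro σ hσ
    have hne := ne_of_gt hσ
    unfold trajProb at hne
    have h1 := left_ne_zero_of_mul hne
    have hinit : σ.1 0 = (x0, false) := by
      by_contra h; rw [if_neg h] at h1; exact h1 rfl
    have hprod := right_ne_zero_of_mul hne
    have hstep : ∀ t : Fin M.T,
        (σ.1 t.succ).2 = ((σ.1 t.castSucc).2 || decide ((σ.1 t.succ).1 ∈ M.Xa)) := by
      intro t
      have := Finset.prod_ne_zero_iff.mp hprod t (Finset.mem_univ t)
      have hP := right_ne_zero_of_mul this
      by_contra h
      apply hP
      simp only [binAug]
      rw [if_neg h]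
    intro t
    induction t using Fin.induction with
    | zero =>
      rw [show σ.1 (0 : Fin (M.T + 1)) = (x0, false) from hinit]
      simp only [Bool.false_eq_true, false_iff]
      rintro ⟨s, hs, hmem⟩
      have : s = 0 := le_antisymm hs (Fin.zero_le s)
      rw [this, show σ.1 (0 : Fin (M.T + 1)) = (x0, false) from hinit] at hmem
      exact hx0 hmem
    | succ t ih =>
      rw [hstep t]
      constructor
      · intro h
        rcases Bool.or_eq_true_iff.mp h with h | h
        · obtain ⟨s, hs, hmem⟩ := ih.mp h
          exact ⟨s, le_trans hs (by simp [Fin.le_def]), hmem⟩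
        · exact ⟨t.succ, le_refl _, of_decide_eq_true h⟩
      · rintro ⟨s, hs, hmem⟩
        rcases eq_or_lt_of_le hs with h | h
        · subst h
          simp [hmem]
        · have : s ≤ t.castSucc := by
            rw [Fin.le_def]; rw [Fin.lt_def] at h
            simp only [Fin.val_succ] at h
            simp only [Fin.coe_castSucc]; omega
          rw [ih.mpr ⟨s, this, hmem⟩]; simp
  refine ⟨main, ?_⟩
  unfold probEvent
  apply Finset.sum_congr rfl
  intro σ _
  rcases lt_or_eq_of_le (trajProb_nonneg (binAug M) q (x0, false) σ) with hpos | hzero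
  · have hiff := main σ hpos (Fin.last M.T)
    have : ((σ.1 (Fin.last (binAug M).T)).2 = true) ↔
        (∃ t, (σ.1 t).1 ∈ M.Xa) := by
      rw [show (Fin.last (binAug M).T) = Fin.last M.T from rfl, hiff]
      constructor
      · rintro ⟨s, _, hm⟩; exact ⟨s, hm⟩
      · rintro ⟨s, hm⟩; exact ⟨s, Fin.le_last s, hm⟩
    by_cases h : (σ.1 (Fin.last (binAug M).T)).2 = true
    · rw [if_pos h, if_pos (this.mp h)]
    · rw [if_neg h, if_neg (fun he => h (this.mpr he))]
  · rw [← hzero]; split <;> split <;> rfl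

end
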